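/- arXiv:0907.5434 — 2 statements merged into one kernel-verified Lean document; each statement's English description precedes it below -/
import Mathlib

section
/- Fix a prime p, a finite field F_q, and t ∈ F_q. The probability that F = F_1 F_2^2 ⋯ F_{p-1}^{p-1} vanishes at t, when (F_1, ..., F_{p-1}) is chosen uniformly among (p-1)-tuples of nonzero residues modulo (X-t)^2 with at most one F_i divisible by (X-t), equals (p-1)/(q+p-1); and for each fixed a ∈ F_q^*, the probability that F(t) = a equals q/((q-1)(q+p-1)). -/
open Polynomial

section Aux

variable {F : Type*} [Field F] [Fintype F]

lemma degree_lt_two_iff (f : F[X]) : f.degree < 2 ↔ f.degree ≤ 1 := by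
  rcases eq_or_ne f 0 with rfl | hf
  · simp [degree_zero]
    exact WithBot.bot_lt_coe 2
  · rw [show (2 : WithBot ℕ) = ((2:ℕ) : WithBot ℕ) from rfl,
      show (1 : WithBot ℕ) = ((1:ℕ) : WithBot ℕ) from rfl,
      ← natDegree_lt_iff_degree_lt hf, ← natDegree_le_iff_degree_le]
    omega

noncomputable def polyOfPair (t : F) (x : F × F) : F[X] :=
  C x.2 * X + C (x.1 - x.2 * t)

lemma polyOfPair_eval (t : F) (x : F × F) : (polyOfPair t x).eval t = x.1 := by
  simp [polyOfPair]

lemma polyOfPair_coeff1 (t : F) (x : F × F) : (polyOfPair t x).coeff 1 = x.2 := by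
  simp [polyOfPair, coeff_C]

lemma polyOfPair_degree (t : F) (x : F × F) : (polyOfPair t x).degree < 2 :=
  (degree_lt_two_iff _).mpr degree_linear_le

lemma polyOfPair_ne_zero_iff (t : F) (x : F × F) : polyOfPair t x ≠ 0 ↔ x ≠ 0 := by
  constructor
  · rintro h rfl; simp [polyOfPair] at h
  · intro hx h
    apply hx
    have h2 : x.2 = 0 := by
      have := polyOfPair_coeff1 t x; rw [h] at this; simpa using this.symm
    have h1 : x.1 = 0 := by
      have := polyOfPair_eval t x; rw [h] at this; simpa using this.symm
    exact Prod.ext h1 h2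

lemma polyOfPair_dvd_iff (t : F) (x : F × F) : (X - C t ∣ polyOfPair t x) ↔ x.1 = 0 := by
  rw [dvd_iff_isRoot, IsRoot.def, polyOfPair_eval]

lemma polyOfPair_eval_coeff (t : F) (f : F[X]) (hf : f.degree < 2) :
    polyOfPair t (f.eval t, f.coeff 1) = f := by
  conv_rhs => rw [eq_X_add_C_of_degree_le_one ((degree_lt_two_iff f).mp hf)]
  unfold polyOfPair
  congr 1
  have : f.eval t = f.coeff 1 * t + f.coeff 0 := by
    conv_lhs => rw [eq_X_add_C_of_degree_le_one ((degree_lt_two_iff f).mp hf)]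
    simp
  simp only [this]
  ring_nf

lemma polyOfPair_injective (t : F) : Function.Injective (polyOfPair t) := by
  intro x y h
  have h1 : x.1 = y.1 := by
    rw [← polyOfPair_eval t x, ← polyOfPair_eval t y, h]
  have h2 : x.2 = y.2 := by
    rw [← polyOfPair_coeff1 t x, ← polyOfPair_coeff1 t y, h]
  exact Prod.ext h1 h2

/-- Pair condition. -/
def PairCond {n : ℕ} (w : Fin n → F × F) : Prop :=
  (∀ i, w i ≠ 0) ∧ ∀ i j, i ≠ j → ¬((w i).1 = 0 ∧ (w j).1 = 0)

lemma card_bridge (t : F) (n : ℕ) (extra : F → Prop) :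
    Nat.card {v : Fin n → Polynomial F //
        ((∀ i, v i ≠ 0 ∧ (v i).degree < 2) ∧
          ∀ i j, i ≠ j → ¬((X - C t ∣ v i) ∧ (X - C t ∣ v j))) ∧
        extra ((∏ i : Fin n, (v i) ^ ((i : ℕ) + 1)).eval t)} =
    Nat.card {w : Fin n → F × F //
        PairCond w ∧ extra (∏ i : Fin n, ((w i).1) ^ ((i : ℕ) + 1))} := by
  have mem : ∀ w : {w : Fin n → F × F //
      PairCond w ∧ extra (∏ i : Fin n, ((w i).1) ^ ((i : ℕ) + 1))},
      ((∀ i, (fun i => polyOfPair t (w.1 i)) i ≠ 0 ∧ ((fun i => polyOfPair t (w.1 i)) i).degree < 2) ∧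
        ∀ i j, i ≠ j → ¬((X - C t ∣ (fun i => polyOfPair t (w.1 i)) i) ∧
          (X - C t ∣ (fun i => polyOfPair t (w.1 i)) j))) ∧
      extra ((∏ i : Fin n, ((fun i => polyOfPair t (w.1 i)) i) ^ ((i : ℕ) + 1)).eval t) := by
    rintro ⟨w, ⟨⟨h1, h2⟩, h3⟩⟩
    refine ⟨⟨fun i => ⟨(polyOfPair_ne_zero_iff t _).mpr (h1 i), polyOfPair_degree t _⟩,
      fun i j hij hd => h2 i j hij
        ⟨(polyOfPair_dvd_iff t _).mp hd.1, (polyOfPair_dvd_iff t _).mp hd.2⟩⟩, ?_⟩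
    simpa [eval_prod, eval_pow, polyOfPair_eval] using h3
  refine (Nat.card_congr (Equiv.ofBijective
    (fun w => ⟨fun i => polyOfPair t (w.1 i), mem w⟩) ⟨?_, ?_⟩)).symm
  · intro w1 w2 h
    apply Subtype.ext; funext i
    exact polyOfPair_injective t (congrFun (congrArg Subtype.val h) i)
  · rintro ⟨v, ⟨⟨hA, hB⟩, hC⟩⟩
    have key : ∀ i, polyOfPair t ((v i).eval t, (v i).coeff 1) = v i :=
      fun i => polyOfPair_eval_coeff t _ (hA i).2
    refine ⟨⟨fun i => ((v i).eval t, (v i).coeff 1), ⟨⟨fun i => ?_, fun i j hij hz => ?_⟩, ?_⟩⟩,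
      Subtype.ext (funext fun i => key i)⟩
    · exact (polyOfPair_ne_zero_iff t _).mp (by rw [key i]; exact (hA i).1)
    · exact hB i j hij ⟨dvd_iff_isRoot.mpr hz.1, dvd_iff_isRoot.mpr hz.2⟩
    · have : (∏ i : Fin n, (v i) ^ ((i : ℕ) + 1)).eval t
          = ∏ i : Fin n, ((v i).eval t) ^ ((i : ℕ) + 1) := by
        simp [eval_prod, eval_pow]
      rw [this] at hC
      exact hC


lemma cardNeZero : Nat.card {x : F // x ≠ 0} = Fintype.card F - 1 := by
  rw [← Nat.card_congr (unitsEquivNeZero (G₀ := F)), Nat.card_units, Nat.card_eq_fintype_card]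

lemma cardFstNe : Nat.card {x : F × F // x.1 ≠ 0} = (Fintype.card F - 1) * Fintype.card F := by
  rw [Nat.card_congr (Equiv.prodSubtypeFstEquivSubtypeProd (p := fun x : F => x ≠ 0)),
    Nat.card_prod, cardNeZero, Nat.card_eq_fintype_card]

lemma cardFstZero : Nat.card {x : F × F // x.1 = 0 ∧ x.2 ≠ 0} = Fintype.card F - 1 := by
  have e : {x : F × F // x.1 = 0 ∧ x.2 ≠ 0} ≃ {c : F // c ≠ 0} := {
    toFun := fun x => ⟨x.1.2, x.2.2⟩
    invFun := fun c => ⟨(0, c.1), ⟨rfl, c.2⟩⟩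
    left_inv := by rintro ⟨⟨x1, x2⟩, ⟨h1, h2⟩⟩; exact Subtype.ext (Prod.ext h1.symm rfl)
    right_inv := fun c => rfl }
  rw [Nat.card_congr e, cardNeZero]

lemma card_allNe (n : ℕ) :
    Nat.card {w : Fin n → F × F // PairCond w ∧ ∀ i, (w i).1 ≠ 0} =
      ((Fintype.card F - 1) * Fintype.card F) ^ n := by
  have e1 : {w : Fin n → F × F // PairCond w ∧ ∀ i, (w i).1 ≠ 0} ≃
      {w : Fin n → F × F // ∀ i, (w i).1 ≠ 0} := by
    apply Equiv.subtypeEquivRight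
    intro w
    constructor
    · exact fun h => h.2
    · intro h
      exact ⟨⟨fun i hz => h i (by rw [hz]; rfl), fun i j _ hz => h i hz.1⟩, h⟩
  rw [Nat.card_congr (e1.trans (Equiv.subtypePiEquivPi (p := fun (_ : Fin n) (b : F × F) => b.1 ≠ 0))), Nat.card_pi]
  simp [cardFstNe]

lemma card_fiber (n : ℕ) (i : Fin n) :
    Nat.card {w : Fin n → F × F // PairCond w ∧ (w i).1 = 0} =
      (Fintype.card F - 1) * ((Fintype.card F - 1) * Fintype.card F) ^ (n - 1) := by
  classical
  have e1 := Equiv.subtypeEquiv (p := fun w : Fin n → F × F => PairCond w ∧ (w i).1 = 0)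
    (q := fun y : (F × F) × ({j : Fin n // j ≠ i} → F × F) =>
      (y.1.1 = 0 ∧ y.1.2 ≠ 0) ∧ ∀ j, ((y.2 j).1 ≠ 0))
    (Equiv.piSplitAt i (fun _ => F × F)) ?_
  · rw [Nat.card_congr (e1.trans (Equiv.subtypeProdEquivProd
      (p := fun x : F × F => x.1 = 0 ∧ x.2 ≠ 0)
      (q := fun g : {j : Fin n // j ≠ i} → F × F => ∀ j, (g j).1 ≠ 0))), Nat.card_prod,
      cardFstZero, Nat.card_congr (Equiv.subtypePiEquivPi
      (p := fun (_ : {j : Fin n // j ≠ i}) (b : F × F) => b.1 ≠ 0)), Nat.card_pi]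
    have hc : Fintype.card {j : Fin n // j ≠ i} = n - 1 := by
      have := Fintype.card_subtype_compl (fun j : Fin n => j = i)
      simpa [Fintype.card_subtype_eq] using this
    simp only [cardFstNe, Finset.prod_const, Finset.card_univ, hc]
  · intro w
    simp only [Equiv.piSplitAt_apply]
    constructor
    · rintro ⟨⟨hne, hpw⟩, hz⟩
      refine ⟨⟨hz, fun h2 => hne i (Prod.ext hz h2)⟩, fun j hj => hpw j.1 i j.2 ⟨hj, hz⟩⟩
    · rintro ⟨⟨hz, h2⟩, hrest⟩
      refine ⟨⟨fun k hk => ?_, fun k l hkl hb => ?_⟩, hz⟩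
      · by_cases hki : k = i
        · subst hki; rw [hk] at h2; exact h2 rfl
        · exact hrest ⟨k, hki⟩ (by rw [hk]; rfl)
      · by_cases hki : k = i
        · subst hki; exact hrest ⟨l, fun h => hkl h.symm⟩ hb.2
        · exact hrest ⟨k, hki⟩ hb.1

lemma card_zero (n : ℕ) :
    Nat.card {w : Fin n → F × F // PairCond w ∧ ∃ i, (w i).1 = 0} =
      n * ((Fintype.card F - 1) * ((Fintype.card F - 1) * Fintype.card F) ^ (n - 1)) := by
  classical
  rw [Nat.card_eq_fintype_card, Fintype.card_subtype]
  have hsplit : (Finset.univ.filter fun w : Fin n → F × F => PairCond w ∧ ∃ i, (w i).1 = 0) =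
      Finset.univ.biUnion (fun i : Fin n =>
        Finset.univ.filter fun w : Fin n → F × F => PairCond w ∧ (w i).1 = 0) := by
    ext w
    simp only [Finset.mem_filter, Finset.mem_biUnion, Finset.mem_univ, true_and]
    tauto
  rw [hsplit, Finset.card_biUnion]
  · have heach : ∀ i : Fin n,
        (Finset.univ.filter fun w : Fin n → F × F => PairCond w ∧ (w i).1 = 0).card =
        (Fintype.card F - 1) * ((Fintype.card F - 1) * Fintype.card F) ^ (n - 1) := by
      intro i
      rw [← Fintype.card_subtype, ← Nat.card_eq_fintype_card, card_fiber]
    rw [Finset.sum_congr rfl (fun i _ => heach i), Finset.sum_const, Finset.card_univ,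
      Fintype.card_fin, smul_eq_mul]
  · intro x _ y _ hxy
    rw [Function.onFun_apply, Finset.disjoint_left]
    rintro w hw hw2
    simp only [Finset.mem_filter] at hw hw2
    exact hw.2.1.2 x y hxy ⟨hw.2.2, hw2.2.2⟩

lemma card_total_split (n : ℕ) :
    Nat.card {w : Fin n → F × F // PairCond w} =
      Nat.card {w : Fin n → F × F // PairCond w ∧ ∀ i, (w i).1 ≠ 0} +
      Nat.card {w : Fin n → F × F // PairCond w ∧ ∃ i, (w i).1 = 0} := by
  classical
  simp_rw [Nat.card_eq_fintype_card, Fintype.card_subtype]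
  have h1 : (Finset.univ.filter fun w : Fin n → F × F => PairCond w ∧ ∀ i, (w i).1 ≠ 0) =
      (Finset.univ.filter fun w : Fin n → F × F => PairCond w).filter
        (fun w => ∀ i, (w i).1 ≠ 0) := by
    rw [Finset.filter_filter]
  have h2 : (Finset.univ.filter fun w : Fin n → F × F => PairCond w ∧ ∃ i, (w i).1 = 0) =
      (Finset.univ.filter fun w : Fin n → F × F => PairCond w).filter
        (fun w => ¬ ∀ i, (w i).1 ≠ 0) := by
    rw [Finset.filter_filter]
    apply Finset.filter_congr
    intro w _
    simp only [eq_iff_iff, and_congr_right_iff]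
    intro _
    push_neg
    tauto
  rw [h1, h2, Finset.card_filter_add_card_filter_not]


lemma card_b (m : ℕ) (a : F) (ha : a ≠ 0) :
    Nat.card {b : Fin (m + 1) → F // (∀ i, b i ≠ 0) ∧ ∏ i, b i ^ ((i : ℕ) + 1) = a} =
      (Fintype.card F - 1) ^ m := by
  have hRne : ∀ c : Fin m → {x : F // x ≠ 0}, (∏ i : Fin m, (c i : F) ^ ((i : ℕ) + 2)) ≠ 0 :=
    fun c => Finset.prod_ne_zero_iff.mpr fun i _ => pow_ne_zero _ (c i).2
  have e : {b : Fin (m + 1) → F // (∀ i, b i ≠ 0) ∧ ∏ i, b i ^ ((i : ℕ) + 1) = a} ≃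
      (Fin m → {x : F // x ≠ 0}) := {
    toFun := fun b i => ⟨b.1 i.succ, b.2.1 i.succ⟩
    invFun := fun c => ⟨Fin.cons (a / ∏ i : Fin m, (c i : F) ^ ((i : ℕ) + 2))
        (fun i => (c i : F)), by
      constructor
      · intro j
        refine Fin.cases ?_ ?_ j
        · rw [Fin.cons_zero]; exact div_ne_zero ha (hRne c)
        · intro i; rw [Fin.cons_succ]; exact (c i).2
      · rw [Fin.prod_univ_succ]
        simp only [Fin.cons_zero, Fin.cons_succ, Fin.val_succ, Fin.val_zero, pow_one,
          zero_add]
        have harith : ∀ x : ℕ, x + 1 + 1 = x + 2 := fun _ => rfl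
        simp only [harith]
        exact div_mul_cancel₀ a (hRne c)⟩
    left_inv := by
      rintro ⟨b, hb, hprod⟩
      apply Subtype.ext
      funext j
      refine Fin.cases ?_ ?_ j
      · dsimp only
        rw [Fin.cons_zero]
        rw [Fin.prod_univ_succ] at hprod
        simp only [Fin.val_succ, Fin.val_zero, zero_add, pow_one] at hprod
        have harith : ∀ x : ℕ, x + 1 + 1 = x + 2 := fun _ => rfl
        simp only [harith] at hprod
        rw [← hprod]
        exact mul_div_cancel_right₀ _ (Finset.prod_ne_zero_iff.mpr
          fun i _ => pow_ne_zero _ (hb i.succ))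
      · intro i
        dsimp only
        rw [Fin.cons_succ]
    right_inv := by
      intro c; funext i; apply Subtype.ext; simp [Fin.cons_succ] }
  rw [Nat.card_congr e, Nat.card_fun, cardNeZero, Nat.card_eq_fintype_card, Fintype.card_fin]

lemma card_eq_a (m : ℕ) (a : F) (ha : a ≠ 0) :
    Nat.card {w : Fin (m + 1) → F × F //
        PairCond w ∧ ∏ i, ((w i).1) ^ ((i : ℕ) + 1) = a} =
      (Fintype.card F - 1) ^ m * Fintype.card F ^ (m + 1) := by
  have e1 : {w : Fin (m + 1) → F × F // PairCond w ∧ ∏ i, ((w i).1) ^ ((i : ℕ) + 1) = a} ≃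
      {w : Fin (m + 1) → F × F //
        (∀ i, (w i).1 ≠ 0) ∧ ∏ i, ((w i).1) ^ ((i : ℕ) + 1) = a} := by
    apply Equiv.subtypeEquivRight
    intro w
    constructor
    · rintro ⟨_, hprod⟩
      refine ⟨fun i => ?_, hprod⟩
      have hne0 : (∏ i, ((w i).1) ^ ((i : ℕ) + 1)) ≠ 0 := by rw [hprod]; exact ha
      have := Finset.prod_ne_zero_iff.mp hne0 i (Finset.mem_univ i)
      exact fun hz => this (by rw [hz, zero_pow (Nat.succ_ne_zero _)])
    · rintro ⟨hne, hprod⟩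
      exact ⟨⟨fun i hz => hne i (by rw [hz]; rfl), fun i j _ hz => hne i hz.1⟩, hprod⟩
  have e2 := Equiv.subtypeEquiv (p := fun w : Fin (m + 1) → F × F =>
      (∀ i, (w i).1 ≠ 0) ∧ ∏ i, ((w i).1) ^ ((i : ℕ) + 1) = a)
    (q := fun s : (Fin (m + 1) → F) × (Fin (m + 1) → F) =>
      (∀ i, s.1 i ≠ 0) ∧ ∏ i, (s.1 i) ^ ((i : ℕ) + 1) = a)
    (Equiv.arrowProdEquivProdArrow (Fin (m + 1)) (fun _ => F) (fun _ => F)) (fun w => Iff.rfl)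
  rw [Nat.card_congr ((e1.trans e2).trans (Equiv.prodSubtypeFstEquivSubtypeProd
    (p := fun b : Fin (m + 1) → F => (∀ i, b i ≠ 0) ∧ ∏ i, (b i) ^ ((i : ℕ) + 1) = a))),
    Nat.card_prod, card_b m a ha, Nat.card_fun, Nat.card_eq_fintype_card,
    Nat.card_eq_fintype_card, Fintype.card_fin]


lemma card_zero_iff_exists (n : ℕ) :
    Nat.card {w : Fin n → F × F // PairCond w ∧ ∏ i, ((w i).1) ^ ((i : ℕ) + 1) = 0} =
      Nat.card {w : Fin n → F × F // PairCond w ∧ ∃ i, (w i).1 = 0} := by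
  apply Nat.card_congr
  apply Equiv.subtypeEquivRight
  intro w
  apply and_congr_right
  intro _
  simp [Finset.prod_eq_zero_iff, pow_eq_zero_iff, Nat.succ_ne_zero]

end Aux

/-- Choosing a `(p-1)`-tuple of nonzero residues modulo `(X-t)^2` (represented
as polynomials of degree `< 2`) with at most one coordinate divisible by `X - t`
uniformly at random, the probability that `F = F_1 F_2^2 ⋯ F_{p-1}^{p-1}`
vanishes at `t` is `(p-1)/(q+p-1)`, and for each fixed `a ≠ 0` the probability
that `F(t) = a` is `q/((q-1)(q+p-1))`. -/
theorem tuple_value_prob_mod_sq (F : Type*) [Field F] [Fintype F] (q p : ℕ)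
    (hq : Fintype.card F = q) (hp : p.Prime) (t : F) :
    ((Nat.card {v : Fin (p - 1) → Polynomial F //
        ((∀ i, v i ≠ 0 ∧ (v i).degree < 2) ∧
          ∀ i j, i ≠ j → ¬((X - C t ∣ v i) ∧ (X - C t ∣ v j))) ∧
        (∏ i : Fin (p - 1), (v i) ^ ((i : ℕ) + 1)).eval t = 0} : ℝ) /
      (Nat.card {v : Fin (p - 1) → Polynomial F //
        (∀ i, v i ≠ 0 ∧ (v i).degree < 2) ∧
          ∀ i j, i ≠ j → ¬((X - C t ∣ v i) ∧ (X - C t ∣ v j))} : ℝ) =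
      ((p : ℝ) - 1) / ((q : ℝ) + (p : ℝ) - 1)) ∧
    ∀ a : F, a ≠ 0 →
      ((Nat.card {v : Fin (p - 1) → Polynomial F //
          ((∀ i, v i ≠ 0 ∧ (v i).degree < 2) ∧
            ∀ i j, i ≠ j → ¬((X - C t ∣ v i) ∧ (X - C t ∣ v j))) ∧
          (∏ i : Fin (p - 1), (v i) ^ ((i : ℕ) + 1)).eval t = a} : ℝ) /
        (Nat.card {v : Fin (p - 1) → Polynomial F //
          (∀ i, v i ≠ 0 ∧ (v i).degree < 2) ∧
            ∀ i j, i ≠ j → ¬((X - C t ∣ v i) ∧ (X - C t ∣ v j))} : ℝ) =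
        (q : ℝ) / (((q : ℝ) - 1) * ((q : ℝ) + (p : ℝ) - 1))) := by
  subst hq
  obtain ⟨m, rfl⟩ : ∃ m, p = m + 2 := ⟨p - 2, by have := hp.two_le; omega⟩
  rw [show m + 2 - 1 = m + 1 from rfl]
  set Q := Fintype.card F with hQdef
  clear_value Q
  have hQ2 : 2 ≤ Q := by rw [hQdef]; exact Fintype.one_lt_card
  -- total count
  have hT : Nat.card {v : Fin (m + 1) → Polynomial F //
      (∀ i, v i ≠ 0 ∧ (v i).degree < 2) ∧
        ∀ i j, i ≠ j → ¬((X - C t ∣ v i) ∧ (X - C t ∣ v j))} =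
      ((Q - 1) * Q) ^ (m + 1) + (m + 1) * ((Q - 1) * ((Q - 1) * Q) ^ m) := by
    have s1 : Nat.card {v : Fin (m + 1) → Polynomial F //
        (∀ i, v i ≠ 0 ∧ (v i).degree < 2) ∧
          ∀ i j, i ≠ j → ¬((X - C t ∣ v i) ∧ (X - C t ∣ v j))} =
        Nat.card {w : Fin (m + 1) → F × F // PairCond w} := by
      calc Nat.card {v : Fin (m + 1) → Polynomial F //
          (∀ i, v i ≠ 0 ∧ (v i).degree < 2) ∧
            ∀ i j, i ≠ j → ¬((X - C t ∣ v i) ∧ (X - C t ∣ v j))} =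
          Nat.card {v : Fin (m + 1) → Polynomial F //
          ((∀ i, v i ≠ 0 ∧ (v i).degree < 2) ∧
            ∀ i j, i ≠ j → ¬((X - C t ∣ v i) ∧ (X - C t ∣ v j))) ∧
            True} := Nat.card_congr (Equiv.subtypeEquivRight
              (fun v => (and_iff_left trivial).symm))
        _ = Nat.card {w : Fin (m + 1) → F × F // PairCond w ∧ True} :=
            card_bridge t (m + 1) (fun _ => True)
        _ = Nat.card {w : Fin (m + 1) → F × F // PairCond w} :=
            Nat.card_congr (Equiv.subtypeEquivRight (fun w => and_iff_left trivial))
    rw [s1, card_total_split, card_allNe, card_zero, hQdef]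
    rfl
  -- zero count
  have hZ : Nat.card {v : Fin (m + 1) → Polynomial F //
      ((∀ i, v i ≠ 0 ∧ (v i).degree < 2) ∧
        ∀ i j, i ≠ j → ¬((X - C t ∣ v i) ∧ (X - C t ∣ v j))) ∧
      (∏ i : Fin (m + 1), (v i) ^ ((i : ℕ) + 1)).eval t = 0} =
      (m + 1) * ((Q - 1) * ((Q - 1) * Q) ^ m) := by
    have s1 : Nat.card {v : Fin (m + 1) → Polynomial F //
        ((∀ i, v i ≠ 0 ∧ (v i).degree < 2) ∧
          ∀ i j, i ≠ j → ¬((X - C t ∣ v i) ∧ (X - C t ∣ v j))) ∧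
        (∏ i : Fin (m + 1), (v i) ^ ((i : ℕ) + 1)).eval t = 0} =
        Nat.card {w : Fin (m + 1) → F × F //
          PairCond w ∧ ∏ i, ((w i).1) ^ ((i : ℕ) + 1) = 0} :=
      card_bridge t (m + 1) (fun x => x = 0)
    rw [s1, card_zero_iff_exists, card_zero, hQdef]
    rfl
  have hx1 : (1 : ℝ) < (Q : ℝ) := by exact_mod_cast hQ2
  have hcQ : ((Q - 1 : ℕ) : ℝ) = (Q : ℝ) - 1 := by
    have h1 : 1 ≤ Q := le_trans one_le_two hQ2
    rw [Nat.cast_sub h1]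
    norm_num
  have hmnn : (0 : ℝ) ≤ (m : ℝ) := Nat.cast_nonneg m
  have hbase : (0 : ℝ) < ((Q : ℝ) - 1) * (Q : ℝ) := mul_pos (by linarith) (by linarith)
  have hTne : (((Q - 1) * Q) ^ (m + 1) : ℝ) + ((m : ℝ) + 1) *
      (((Q : ℝ) - 1) * (((Q : ℝ) - 1) * (Q : ℝ)) ^ m) ≠ 0 := by
    have h1 : (0 : ℝ) < (((Q : ℝ) - 1) * (Q : ℝ)) ^ (m + 1) := pow_pos hbase _
    have h2 : (0 : ℝ) ≤ ((m : ℝ) + 1) * (((Q : ℝ) - 1) * (((Q : ℝ) - 1) * (Q : ℝ)) ^ m) := by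
      apply mul_nonneg (by linarith)
      exact mul_nonneg (by linarith) (le_of_lt (pow_pos hbase m))
    have := add_pos_of_pos_of_nonneg h1 h2
    intro hzero
    rw [hzero] at this
    exact lt_irrefl 0 this
  have hden1 : (Q : ℝ) + ((m : ℝ) + 2) - 1 ≠ 0 := by intro h; nlinarith
  constructor
  · rw [hZ, hT]
    push_cast [hcQ]
    rw [div_eq_div_iff hTne (by intro h; apply hden1; linarith [h])]
    ring
  · intro a ha
    have hA : Nat.card {v : Fin (m + 1) → Polynomial F //
        ((∀ i, v i ≠ 0 ∧ (v i).degree < 2) ∧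
          ∀ i j, i ≠ j → ¬((X - C t ∣ v i) ∧ (X - C t ∣ v j))) ∧
        (∏ i : Fin (m + 1), (v i) ^ ((i : ℕ) + 1)).eval t = a} =
        (Q - 1) ^ m * Q ^ (m + 1) := by
      have s1 : Nat.card {v : Fin (m + 1) → Polynomial F //
          ((∀ i, v i ≠ 0 ∧ (v i).degree < 2) ∧
            ∀ i j, i ≠ j → ¬((X - C t ∣ v i) ∧ (X - C t ∣ v j))) ∧
          (∏ i : Fin (m + 1), (v i) ^ ((i : ℕ) + 1)).eval t = a} =
          Nat.card {w : Fin (m + 1) → F × F //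
            PairCond w ∧ ∏ i, ((w i).1) ^ ((i : ℕ) + 1) = a} :=
        card_bridge t (m + 1) (fun x => x = a)
      rw [s1, card_eq_a m a ha, hQdef]
    rw [hA, hT]
    push_cast [hcQ]
    rw [div_eq_div_iff hTne ?hne]
    case hne =>
      intro h
      rcases mul_eq_zero.mp h with h' | h'
      · linarith
      · apply hden1; linarith
    simp only [mul_pow]
    ring
end

section
/- Let x_1, ..., x_ℓ be distinct elements of F_q (ℓ ≤ q) and let U ∈ F_q[X] with U(x_i) ≠ 0 for all i. Then ∑_{D monic, (D,U)=1, D(x_i)≠0 ∀i} μ(D) q^{-2 deg D} = (1 - q^{-1}) (1 - q^{-2})^{-ℓ} ∏_{P | U}(1 - q^{-2 deg P})^{-1}, where the product runs over distinct monic irreducible divisors P of U. -/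
open scoped Classical

/-- The Möbius function on polynomials over a field. -/
noncomputable def polyMoebius' {F : Type*} [Field F] (D : Polynomial F) : ℤ :=
  if Squarefree D then (-1) ^ (UniqueFactorizationMonoid.factors D).card else 0

namespace MoebiusAux

open Polynomial UniqueFactorizationMonoid Finset

variable {F : Type*} [Field F]

lemma card_factors_eq (D : Polynomial F) :
    (factors D).card = (normalizedFactors D).card := by
  rw [normalizedFactors, Multiset.card_map]

lemma polyMoebius'_eq (D : Polynomial F) :
    polyMoebius' D = if Squarefree D then (-1) ^ (normalizedFactors D).card else 0 := by
  rw [polyMoebius', card_factors_eq]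

lemma polyMoebius'_one : polyMoebius' (1 : Polynomial F) = 1 := by
  rw [polyMoebius'_eq, if_pos squarefree_one, normalizedFactors_one]
  simp

lemma polyMoebius'_mul {A B : Polynomial F} (hA : A ≠ 0) (hB : B ≠ 0)
    (h : IsRelPrime A B) :
    polyMoebius' (A * B) = polyMoebius' A * polyMoebius' B := by
  simp only [polyMoebius'_eq]
  by_cases hsA : Squarefree A
  · by_cases hsB : Squarefree B
    · rw [if_pos (squarefree_mul_iff.2 ⟨h, hsA, hsB⟩), if_pos hsA, if_pos hsB,
        normalizedFactors_mul hA hB, Multiset.card_add, pow_add]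
    · rw [if_neg hsB, if_neg, mul_zero]
      exact fun hs => hsB (squarefree_mul_iff.1 hs).2.2
  · rw [if_neg hsA, if_neg, zero_mul]
    exact fun hs => hsA (squarefree_mul_iff.1 hs).2.1

lemma polyMoebius'_prime {P : Polynomial F} (hP : Prime P) : polyMoebius' P = -1 := by
  rw [polyMoebius'_eq, if_pos hP.squarefree, normalizedFactors_irreducible hP.irreducible]
  simp

lemma polyMoebius'_abs_le (D : Polynomial F) : |(polyMoebius' D : ℝ)| ≤ 1 := by
  rw [polyMoebius']
  split_ifs
  · push_cast; rw [abs_pow, abs_neg, abs_one, one_pow]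
  · simp

/-! ### Counting monic polynomials -/

noncomputable def coeffsToMonic (n : ℕ) (c : Fin n → F) : Polynomial F :=
  X ^ n + ∑ i : Fin n, C (c i) * X ^ (i : ℕ)

lemma coeffsToMonic_coeff (n : ℕ) (c : Fin n → F) (k : ℕ) :
    (coeffsToMonic n c).coeff k =
      if k = n then 1 else if h : k < n then c ⟨k, h⟩ else 0 := by
  rw [coeffsToMonic, coeff_add, coeff_X_pow, finset_sum_coeff]
  simp only [coeff_C_mul, coeff_X_pow]
  by_cases hk : k = n
  · subst hk
    rw [if_pos rfl, if_pos rfl]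
    rw [Finset.sum_eq_zero, add_zero]
    intro i _
    have hi := i.2
    rw [if_neg (by omega), mul_zero]
  · rw [if_neg (by omega), if_neg hk, zero_add]
    by_cases hkn : k < n
    · rw [dif_pos hkn]
      rw [Finset.sum_eq_single (⟨k, hkn⟩ : Fin n)]
      · simp
      · intro i _ hi
        rw [if_neg, mul_zero]
        intro h
        exact hi (Fin.ext h.symm)
      · simp
    · rw [dif_neg hkn]
      apply Finset.sum_eq_zero
      intro i _
      have hi := i.2
      rw [if_neg (by omega), mul_zero]

lemma coeffsToMonic_monic (n : ℕ) (c : Fin n → F) :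
    (coeffsToMonic n c).Monic ∧ (coeffsToMonic n c).natDegree = n := by
  have h1 : (coeffsToMonic n c).coeff n = 1 := by rw [coeffsToMonic_coeff, if_pos rfl]
  have h2 : ∀ k, n < k → (coeffsToMonic n c).coeff k = 0 := by
    intro k hk
    rw [coeffsToMonic_coeff, if_neg (Nat.ne_of_gt hk), dif_neg (by omega)]
  have hne : coeffsToMonic n c ≠ 0 := fun h => by simp [h] at h1
  have hdeg : (coeffsToMonic n c).natDegree = n := by
    apply le_antisymm
    · exact natDegree_le_iff_coeff_eq_zero.2 h2
    · exact le_natDegree_of_ne_zero (h1 ▸ one_ne_zero)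
  exact ⟨by rwa [Monic, leadingCoeff, hdeg], hdeg⟩

lemma coeffsToMonic_injective (n : ℕ) : Function.Injective (coeffsToMonic (F := F) n) := by
  intro c c' h
  funext i
  have := congrArg (fun p => Polynomial.coeff p i) h
  simpa [coeffsToMonic_coeff, i.2, Nat.ne_of_lt i.2] using this

lemma coeffsToMonic_surj {n : ℕ} {D : Polynomial F} (hD : D.Monic) (hdeg : D.natDegree = n) :
    ∃ c : Fin n → F, coeffsToMonic n c = D := by
  refine ⟨fun i => D.coeff i, ?_⟩
  ext k
  rw [coeffsToMonic_coeff]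
  by_cases hk : k = n
  · subst hk; rw [if_pos rfl]
    have hlc := hD.leadingCoeff
    rw [leadingCoeff, hdeg] at hlc
    exact hlc.symm
  · rw [if_neg hk]
    by_cases hkn : k < n
    · rw [dif_pos hkn]
    · rw [dif_neg hkn]
      symm
      apply coeff_eq_zero_of_natDegree_lt
      omega

noncomputable def monicSlice (F : Type*) [Field F] [Fintype F] (n : ℕ) : Finset (Polynomial F) :=
  Finset.image (coeffsToMonic n) Finset.univ

variable [Fintype F]

lemma mem_monicSlice {n : ℕ} {D : Polynomial F} :
    D ∈ monicSlice F n ↔ D.Monic ∧ D.natDegree = n := by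
  constructor
  · rintro h
    rcases Finset.mem_image.1 h with ⟨c, -, rfl⟩
    exact coeffsToMonic_monic n c
  · rintro ⟨h1, h2⟩
    rcases coeffsToMonic_surj h1 h2 with ⟨c, rfl⟩
    exact Finset.mem_image_of_mem _ (Finset.mem_univ c)

lemma card_monicSlice (n : ℕ) : (monicSlice F n).card = Fintype.card F ^ n := by
  rw [monicSlice, Finset.card_image_of_injective _ (coeffsToMonic_injective n),
    Finset.card_univ, Fintype.card_fun]
  simp

lemma monicSlice_zero : monicSlice F 0 = {1} := by
  ext D
  rw [mem_monicSlice, Finset.mem_singleton]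
  constructor
  · rintro ⟨h1, h2⟩
    exact h1.natDegree_eq_zero.1 h2
  · rintro rfl; exact ⟨monic_one, natDegree_one⟩


/-! ### Summability -/

lemma summable_monic {r : ℝ} (hr : 0 ≤ r) (hqr : (Fintype.card F : ℝ) * r < 1) :
    Summable (fun D : Polynomial F => if D.Monic then r ^ D.natDegree else 0) := by
  set c : ℝ := (1 - (Fintype.card F : ℝ) * r)⁻¹ with hc
  have hqr0 : (0:ℝ) ≤ (Fintype.card F : ℝ) * r := by positivity
  refine summable_of_sum_le (c := c) ?_ ?_
  · intro D
    dsimp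
    split_ifs
    · positivity
    · exact le_rfl
  · intro s
    classical
    set N := s.sup Polynomial.natDegree with hN
    have hsub : s.filter Polynomial.Monic ⊆ (Finset.range (N+1)).biUnion (monicSlice F) := by
      intro D hD
      rw [Finset.mem_filter] at hD
      rw [Finset.mem_biUnion]
      refine ⟨D.natDegree, ?_, mem_monicSlice.2 ⟨hD.2, rfl⟩⟩
      rw [Finset.mem_range]
      exact Nat.lt_succ_of_le (Finset.le_sup hD.1)
    calc ∑ D ∈ s, (if D.Monic then r ^ D.natDegree else 0)
        = ∑ D ∈ s.filter Polynomial.Monic, r ^ D.natDegree := by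
          rw [Finset.sum_filter]
      _ ≤ ∑ D ∈ (Finset.range (N+1)).biUnion (monicSlice F), r ^ D.natDegree := by
          apply Finset.sum_le_sum_of_subset_of_nonneg hsub
          intro i _ _; positivity
      _ = ∑ n ∈ Finset.range (N+1), ∑ D ∈ monicSlice F n, r ^ D.natDegree := by
          rw [Finset.sum_biUnion]
          intro a _ b _ hab
          apply Finset.disjoint_left.2
          intro D hDa hDb
          exact hab ((mem_monicSlice.1 hDa).2 ▸ (mem_monicSlice.1 hDb).2.symm ▸ rfl)
      _ = ∑ n ∈ Finset.range (N+1), ((Fintype.card F : ℝ) * r) ^ n := by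
          apply Finset.sum_congr rfl
          intro n _
          rw [Finset.sum_congr rfl (fun D hD => by rw [(mem_monicSlice.1 hD).2]),
            Finset.sum_const, card_monicSlice, nsmul_eq_mul, mul_pow]
          push_cast
          ring
      _ ≤ c := by
          rw [hc, ← tsum_geometric_of_lt_one hqr0 hqr]
          exact Summable.sum_le_tsum _ (fun i _ => by positivity)
            (summable_geometric_of_lt_one hqr0 hqr)

lemma summable_of_le_monic {f : Polynomial F → ℝ} {r : ℝ} (hr : 0 ≤ r)
    (hqr : (Fintype.card F : ℝ) * r < 1)
    (hf : ∀ D, |f D| ≤ (if D.Monic then r ^ D.natDegree else 0)) : Summable f := by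
  apply Summable.of_abs
  apply Summable.of_nonneg_of_le (fun D => abs_nonneg _) hf (summable_monic hr hqr)

/-- write a tsum supported on monic polynomials as a sum over degrees. -/
lemma tsum_monic_eq (f : Polynomial F → ℝ) (hsum : Summable f)
    (hsupp : ∀ D, ¬ D.Monic → f D = 0) :
    ∑' D, f D = ∑' n : ℕ, ∑ D ∈ monicSlice F n, f D := by
  classical
  have hinj : Function.Injective
      (fun p : Σ n : ℕ, {D // D ∈ monicSlice F n} => (p.2 : Polynomial F)) := by
    rintro ⟨n, D, hD⟩ ⟨m, E, hE⟩ h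
    simp only at h
    subst h
    have : n = m := ((mem_monicSlice.1 hD).2).symm.trans (mem_monicSlice.1 hE).2
    subst this
    rfl
  have hrange : Function.support f ⊆
      Set.range (fun p : Σ n : ℕ, {D // D ∈ monicSlice F n} => (p.2 : Polynomial F)) := by
    intro D hD
    have hmon : D.Monic := by
      by_contra h
      exact hD (hsupp D h)
    exact ⟨⟨D.natDegree, ⟨D, mem_monicSlice.2 ⟨hmon, rfl⟩⟩⟩, rfl⟩
  rw [← Function.Injective.tsum_eq hinj hrange]
  rw [Summable.tsum_sigma']
  · apply tsum_congr
    intro n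
    exact Finset.tsum_subtype (monicSlice F n) f
  · exact fun n => (hasSum_fintype _).summable
  · refine (Function.Injective.summable_iff hinj ?_).2 hsum
    intro D hD
    by_contra h
    exact hD (hrange h)


/-! ### Prime factors as a finset -/

noncomputable def primesOf (D : Polynomial F) : Finset (Polynomial F) :=
  (normalizedFactors D).toFinset

lemma mem_primesOf {D P : Polynomial F} (hD : D ≠ 0) :
    P ∈ primesOf D ↔ P.Monic ∧ Irreducible P ∧ P ∣ D := by
  rw [primesOf, Multiset.mem_toFinset]
  constructor
  · intro h
    have hP := prime_of_normalized_factor P h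
    have hnorm := normalize_normalized_factor P h
    refine ⟨?_, hP.irreducible, dvd_of_mem_normalizedFactors h⟩
    rw [← hnorm]
    exact monic_normalize hP.ne_zero
  · rintro ⟨hm, hirr, hdvd⟩
    obtain ⟨Q, hQ, hassoc⟩ := exists_mem_normalizedFactors_of_dvd hD hirr hdvd
    have hQm : Q.Monic := by
      rw [← normalize_normalized_factor Q hQ]
      exact monic_normalize (prime_of_normalized_factor Q hQ).ne_zero
    rwa [eq_of_monic_of_associated hm hQm hassoc]

lemma normalizedFactors_finset_prod {S : Finset (Polynomial F)}
    (hS : ∀ P ∈ S, P.Monic ∧ Irreducible P) :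
    normalizedFactors (∏ P ∈ S, P) = S.val := by
  rw [Finset.prod_eq_multiset_prod, Multiset.map_id',
    normalizedFactors_prod_eq _ (fun a ha => (hS a ha).2)]
  exact (Multiset.map_congr rfl (fun a ha => (hS a ha).1.normalize_eq_self)).trans
    (Multiset.map_id' _)

lemma prod_primes_monic {S : Finset (Polynomial F)}
    (hS : ∀ P ∈ S, P.Monic ∧ Irreducible P) : (∏ P ∈ S, P).Monic :=
  monic_prod_of_monic _ _ (fun P hP => (hS P hP).1)

lemma prod_subset_primesOf_dvd {D : Polynomial F} (hD : D ≠ 0) {S : Finset (Polynomial F)}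
    (hS : S ⊆ primesOf D) : (∏ P ∈ S, P) ∣ D := by
  have hle : S.val ≤ normalizedFactors D := by
    rw [Multiset.le_iff_count]
    intro P
    by_cases h : P ∈ S
    · have h1 : S.val.count P = 1 := by
        rw [Multiset.count_eq_one_of_mem S.nodup h]
      rw [h1]
      exact Multiset.one_le_count_iff_mem.2 (Multiset.mem_toFinset.1 (hS h))
    · rw [Multiset.count_eq_zero_of_notMem (fun hc => h hc)]
      exact Nat.zero_le _
  calc (∏ P ∈ S, P) = S.val.prod := by
        rw [Finset.prod_eq_multiset_prod, Multiset.map_id']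
    _ ∣ (normalizedFactors D).prod := Multiset.prod_dvd_prod_of_le hle
    _ ∣ D := (prod_normalizedFactors hD).dvd

/-- the Möbius sum over monic divisors. -/
noncomputable def monicDivisors (D : Polynomial F) : Finset (Polynomial F) :=
  ((Finset.range (D.natDegree + 1)).biUnion (monicSlice F)).filter (· ∣ D)

lemma mem_monicDivisors {D E : Polynomial F} (hD : D ≠ 0) :
    E ∈ monicDivisors D ↔ E.Monic ∧ E ∣ D := by
  rw [monicDivisors, Finset.mem_filter, Finset.mem_biUnion]
  constructor
  · rintro ⟨⟨n, -, hE⟩, hdvd⟩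
    exact ⟨(mem_monicSlice.1 hE).1, hdvd⟩
  · rintro ⟨hm, hdvd⟩
    refine ⟨⟨E.natDegree, ?_, mem_monicSlice.2 ⟨hm, rfl⟩⟩, hdvd⟩
    rw [Finset.mem_range]
    exact Nat.lt_succ_of_le (natDegree_le_of_dvd hdvd hD)

lemma sum_moebius_monicDivisors {D : Polynomial F} (hD : D.Monic) :
    ∑ E ∈ monicDivisors D, polyMoebius' E = if D = 1 then 1 else 0 := by
  classical
  have hD0 : D ≠ 0 := hD.ne_zero
  have key : ∀ P ∈ primesOf D, P.Monic ∧ Irreducible P := by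
    intro P hP
    have := (mem_primesOf hD0).1 hP
    exact ⟨this.1, this.2.1⟩
  have step1 : ∑ E ∈ monicDivisors D, polyMoebius' E
      = ∑ E ∈ (monicDivisors D).filter Squarefree, polyMoebius' E := by
    symm
    apply Finset.sum_filter_of_ne
    intro E _ hE
    by_contra h
    exact hE (by rw [polyMoebius', if_neg h])
  rw [step1]
  have step2 : ∑ E ∈ (monicDivisors D).filter Squarefree, polyMoebius' E
      = ∑ S ∈ (primesOf D).powerset, (-1 : ℤ) ^ S.card := by
    apply Finset.sum_nbij' (i := fun E => primesOf E) (j := fun S => ∏ P ∈ S, P)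
    · -- maps into powerset
      intro E hE
      rw [Finset.mem_filter] at hE
      obtain ⟨hEdvd, hEsq⟩ := hE
      obtain ⟨hEm, hEdvd⟩ := (mem_monicDivisors hD0).1 hEdvd
      rw [Finset.mem_powerset]
      intro P hP
      rw [mem_primesOf hEm.ne_zero] at hP
      exact (mem_primesOf hD0).2 ⟨hP.1, hP.2.1, hP.2.2.trans hEdvd⟩
    · -- maps back
      intro S hS
      rw [Finset.mem_powerset] at hS
      have hSmi : ∀ P ∈ S, P.Monic ∧ Irreducible P := fun P hP => key P (hS hP)
      rw [Finset.mem_filter]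
      refine ⟨(mem_monicDivisors hD0).2 ⟨prod_primes_monic hSmi, prod_subset_primesOf_dvd hD0 hS⟩, ?_⟩
      rw [squarefree_iff_nodup_normalizedFactors (prod_primes_monic hSmi).ne_zero,
        normalizedFactors_finset_prod hSmi]
      exact S.nodup
    · -- left inverse
      intro E hE
      rw [Finset.mem_filter] at hE
      obtain ⟨hEdvd, hEsq⟩ := hE
      obtain ⟨hEm, hEdvd2⟩ := (mem_monicDivisors hD0).1 hEdvd
      have hnodup : (normalizedFactors E).Nodup :=
        (squarefree_iff_nodup_normalizedFactors hEm.ne_zero).1 hEsq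
      have : (primesOf E).val = normalizedFactors E := by
        rw [primesOf, Multiset.toFinset_val, Multiset.dedup_eq_self.2 hnodup]
      rw [Finset.prod_eq_multiset_prod, Multiset.map_id', this]
      apply eq_of_monic_of_associated ?_ hEm (prod_normalizedFactors hEm.ne_zero)
      have := monic_multiset_prod_of_monic (normalizedFactors E) (fun P => P)
        (fun P hP => ((mem_primesOf hEm.ne_zero).1 (Multiset.mem_toFinset.2 hP)).1)
      rwa [Multiset.map_id'] at this
    · -- right inverse
      intro S hS
      rw [Finset.mem_powerset] at hS
      have hSmi : ∀ P ∈ S, P.Monic ∧ Irreducible P := fun P hP => key P (hS hP)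
      rw [primesOf, normalizedFactors_finset_prod hSmi]
      exact S.val_toFinset
    · -- values
      intro E hE
      rw [Finset.mem_filter] at hE
      obtain ⟨hEdvd, hEsq⟩ := hE
      obtain ⟨hEm, -⟩ := (mem_monicDivisors hD0).1 hEdvd
      rw [polyMoebius'_eq, if_pos hEsq]
      congr 1
      rw [primesOf, Multiset.toFinset_card_of_nodup
        ((squarefree_iff_nodup_normalizedFactors hEm.ne_zero).1 hEsq)]
  rw [step2, Finset.sum_powerset_neg_one_pow_card]
  congr 1
  rw [eq_iff_iff]
  constructor
  · intro h
    rw [primesOf, Multiset.toFinset_eq_empty] at h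
    have : IsUnit D := by
      have := prod_normalizedFactors hD0
      rw [h] at this
      simpa using (associated_one_iff_isUnit.1 this.symm)
    exact hD.eq_one_of_isUnit this
  · rintro rfl
    rw [primesOf, normalizedFactors_one]
    rfl


/-! ### The Möbius sums by degree -/

noncomputable def Mfun (F : Type*) [Field F] [Fintype F] (n : ℕ) : ℤ :=
  ∑ D ∈ monicSlice F n, polyMoebius' D

lemma Mfun_recursion (n : ℕ) :
    ∑ e ∈ Finset.range (n+1), Mfun F e * (Fintype.card F : ℤ) ^ (n - e)
      = if n = 0 then 1 else 0 := by
  classical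
  have h1 : ∑ D ∈ monicSlice F n, (∑ E ∈ monicDivisors D, polyMoebius' E)
      = if n = 0 then 1 else 0 := by
    rw [Finset.sum_congr rfl (fun D hD => sum_moebius_monicDivisors (mem_monicSlice.1 hD).1)]
    by_cases hn : n = 0
    · subst hn; rw [monicSlice_zero]; simp
    · rw [if_neg hn]
      apply Finset.sum_eq_zero
      intro D hD
      rw [if_neg]
      intro h
      subst h
      have := (mem_monicSlice.1 hD).2
      rw [natDegree_one] at this
      exact hn this.symm
  rw [← h1]
  have h2 : ∀ e ∈ Finset.range (n+1), Mfun F e * (Fintype.card F : ℤ) ^ (n - e)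
      = ∑ p ∈ (monicSlice F e) ×ˢ (monicSlice F (n - e)), polyMoebius' p.1 := by
    intro e _
    rw [Finset.sum_product, Mfun, Finset.sum_mul]
    apply Finset.sum_congr rfl
    intro E _
    show polyMoebius' E * (Fintype.card F : ℤ) ^ (n - e)
        = ∑ _y ∈ monicSlice F (n - e), polyMoebius' E
    rw [Finset.sum_const, nsmul_eq_mul, card_monicSlice]
    push_cast
    ring
  rw [Finset.sum_congr rfl h2]
  rw [Finset.sum_sigma', Finset.sum_sigma']
  apply Finset.sum_nbij' (i := fun p => ⟨p.2.1 * p.2.2, p.2.1⟩)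
    (j := fun p => ⟨p.2.natDegree, (p.2, p.1 / p.2)⟩)
  · rintro ⟨e, E, G⟩ hp
    rw [Finset.mem_sigma, Finset.mem_range, Finset.mem_product] at hp
    obtain ⟨he, hE, hG⟩ := hp
    obtain ⟨hEm, hEd⟩ := mem_monicSlice.1 hE
    obtain ⟨hGm, hGd⟩ := mem_monicSlice.1 hG
    rw [Finset.mem_sigma]
    constructor
    · rw [mem_monicSlice]
      refine ⟨hEm.mul hGm, ?_⟩
      rw [natDegree_mul hEm.ne_zero hGm.ne_zero, hEd, hGd]
      omega
    · rw [mem_monicDivisors (hEm.mul hGm).ne_zero]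
      exact ⟨hEm, dvd_mul_right E G⟩
  · rintro ⟨D, E⟩ hp
    rw [Finset.mem_sigma] at hp
    obtain ⟨hD, hE⟩ := hp
    obtain ⟨hDm, hDd⟩ := mem_monicSlice.1 hD
    obtain ⟨hEm, hEdvd⟩ := (mem_monicDivisors hDm.ne_zero).1 hE
    have hmd : E * (D / E) = D := EuclideanDomain.mul_div_cancel' hEm.ne_zero hEdvd
    have hGm : (D / E).Monic := hEm.of_mul_monic_left (hmd.symm ▸ hDm)
    have hdeg : E.natDegree + (D / E).natDegree = n := by
      rw [← natDegree_mul hEm.ne_zero hGm.ne_zero, hmd, hDd]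
    rw [Finset.mem_sigma, Finset.mem_range, Finset.mem_product]
    dsimp only
    refine ⟨by omega, mem_monicSlice.2 ⟨hEm, rfl⟩, mem_monicSlice.2 ⟨hGm, by omega⟩⟩
  · rintro ⟨e, E, G⟩ hp
    rw [Finset.mem_sigma, Finset.mem_range, Finset.mem_product] at hp
    obtain ⟨he, hE, hG⟩ := hp
    obtain ⟨hEm, hEd⟩ := mem_monicSlice.1 hE
    obtain ⟨hGm, hGd⟩ := mem_monicSlice.1 hG
    have h4 : E * (E * G / E) = E * G :=
      EuclideanDomain.mul_div_cancel' hEm.ne_zero (dvd_mul_right E G)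
    have h5 : E * G / E = G := mul_left_cancel₀ hEm.ne_zero h4
    dsimp only
    rw [h5, hEd]
  · rintro ⟨D, E⟩ hp
    rw [Finset.mem_sigma] at hp
    obtain ⟨hD, hE⟩ := hp
    obtain ⟨hDm, hDd⟩ := mem_monicSlice.1 hD
    obtain ⟨hEm, hEdvd⟩ := (mem_monicDivisors hDm.ne_zero).1 hE
    have hmd : E * (D / E) = D := EuclideanDomain.mul_div_cancel' hEm.ne_zero hEdvd
    dsimp only
    rw [hmd]
  · rintro ⟨e, E, G⟩ _
    rfl

lemma Mfun_zero : Mfun F 0 = 1 := by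
  rw [Mfun, monicSlice_zero, Finset.sum_singleton, polyMoebius'_one]

lemma Mfun_eq {n : ℕ} (hn : 1 ≤ n) :
    Mfun F n = if n = 1 then -(Fintype.card F : ℤ) else 0 := by
  have h1 := Mfun_recursion (F := F) n
  have h2 := Mfun_recursion (F := F) (n - 1)
  rw [if_neg (by omega)] at h1
  rw [Finset.sum_range_succ] at h1
  have h3 : ∑ e ∈ Finset.range n, Mfun F e * (Fintype.card F : ℤ) ^ (n - e)
      = (Fintype.card F : ℤ) *
        ∑ e ∈ Finset.range (n - 1 + 1), Mfun F e * (Fintype.card F : ℤ) ^ (n - 1 - e) := by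
    rw [Finset.mul_sum]
    have hr : n - 1 + 1 = n := by omega
    rw [hr]
    apply Finset.sum_congr rfl
    intro e he
    rw [Finset.mem_range] at he
    have hne : n - e = (n - 1 - e) + 1 := by omega
    rw [hne, pow_succ]
    ring
  rw [h3, h2] at h1
  by_cases h : n = 1
  · subst h
    rw [if_pos rfl]
    norm_num at h1
    omega
  · rw [if_neg h]
    rw [if_neg (show ¬ n - 1 = 0 by omega)] at h1
    rw [Nat.sub_self, pow_zero, mul_one, mul_zero, zero_add] at h1
    exact h1

lemma tsum_moebius_all {u : ℝ} (hu : 0 ≤ u) (hqu : (Fintype.card F : ℝ) * u < 1) :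
    ∑' D : Polynomial F, (if D.Monic then (polyMoebius' D : ℝ) * u ^ D.natDegree else 0)
      = 1 - (Fintype.card F : ℝ) * u := by
  classical
  have hsum : Summable (fun D : Polynomial F =>
      (if D.Monic then (polyMoebius' D : ℝ) * u ^ D.natDegree else 0)) := by
    apply summable_of_le_monic hu hqu
    intro D
    split_ifs
    · rw [abs_mul]
      calc |(polyMoebius' D : ℝ)| * |u ^ D.natDegree| ≤ 1 * |u ^ D.natDegree| := by
            apply mul_le_mul_of_nonneg_right (polyMoebius'_abs_le D) (abs_nonneg _)
        _ = u ^ D.natDegree := by rw [one_mul, abs_of_nonneg (by positivity)]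
    · simp
  rw [tsum_monic_eq _ hsum (fun D h => if_neg (fun hc => h hc))]
  have hinner : ∀ n : ℕ, ∑ D ∈ monicSlice F n,
      (if D.Monic then (polyMoebius' D : ℝ) * u ^ D.natDegree else 0)
      = (Mfun F n : ℝ) * u ^ n := by
    intro n
    calc ∑ D ∈ monicSlice F n, (if D.Monic then (polyMoebius' D : ℝ) * u ^ D.natDegree else 0)
        = ∑ D ∈ monicSlice F n, (polyMoebius' D : ℝ) * u ^ n := by
          apply Finset.sum_congr rfl
          intro D hD
          rw [if_pos (mem_monicSlice.1 hD).1, (mem_monicSlice.1 hD).2]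
      _ = (∑ D ∈ monicSlice F n, (polyMoebius' D : ℝ)) * u ^ n := (Finset.sum_mul _ _ _).symm
      _ = (Mfun F n : ℝ) * u ^ n := by rw [Mfun]; push_cast; rfl
  rw [tsum_congr hinner]
  rw [tsum_eq_sum (s := ({0, 1} : Finset ℕ)) ?_]
  · rw [Finset.sum_insert (by norm_num), Finset.sum_singleton, Mfun_zero,
      Mfun_eq le_rfl, if_pos rfl]
    push_cast
    ring
  · intro n hn
    simp only [Finset.mem_insert, Finset.mem_singleton] at hn
    rw [Mfun_eq (by omega), if_neg (by omega)]
    push_cast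
    ring


/-! ### Euler factors -/

lemma isRelPrime_of_irreducible_not_dvd {P D : Polynomial F} (hP : Irreducible P)
    (h : ¬ P ∣ D) : IsRelPrime P D := by
  intro x hxP hxD
  obtain ⟨y, hy⟩ := hxP
  rcases hP.isUnit_or_isUnit hy with hx | hy'
  · exact hx
  · exfalso
    apply h
    have hPx : P ∣ x := by
      obtain ⟨yu, rfl⟩ := hy'
      exact ⟨(yu⁻¹ : (Polynomial F)ˣ), by rw [hy, mul_assoc, Units.mul_inv, mul_one]⟩
    exact hPx.trans hxD

noncomputable def fT (T : Finset (Polynomial F)) (u : ℝ) (D : Polynomial F) : ℝ :=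
  if D.Monic ∧ ∀ P ∈ T, ¬ P ∣ D then (polyMoebius' D : ℝ) * u ^ D.natDegree else 0

lemma fT_summable {u : ℝ} (hu : 0 ≤ u) (hqu : (Fintype.card F : ℝ) * u < 1)
    (T : Finset (Polynomial F)) : Summable (fT T u) := by
  apply summable_of_le_monic hu hqu
  intro D
  rw [fT]
  split_ifs with h1 h2 h2
  · rw [abs_mul]
    calc |(polyMoebius' D : ℝ)| * |u ^ D.natDegree| ≤ 1 * |u ^ D.natDegree| :=
          mul_le_mul_of_nonneg_right (polyMoebius'_abs_le D) (abs_nonneg _)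
      _ = u ^ D.natDegree := by rw [one_mul, abs_of_nonneg (by positivity)]
  · exact absurd h1.1 h2
  · simp; positivity
  · simp

lemma fT_ne_zero_iff {T : Finset (Polynomial F)} {u : ℝ} (hu : 0 < u) {D : Polynomial F} :
    fT T u D ≠ 0 ↔ D.Monic ∧ (∀ P ∈ T, ¬ P ∣ D) ∧ Squarefree D := by
  rw [fT]
  constructor
  · intro h
    by_cases hc : D.Monic ∧ ∀ P ∈ T, ¬ P ∣ D
    · refine ⟨hc.1, hc.2, ?_⟩
      rw [if_pos hc] at h
      by_contra hsq
      rw [polyMoebius', if_neg hsq] at h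
      simp at h
    · rw [if_neg hc] at h
      exact absurd rfl h
  · rintro ⟨h1, h2, h3⟩
    rw [if_pos ⟨h1, h2⟩]
    apply mul_ne_zero
    · rw [polyMoebius', if_pos h3]
      push_cast
      apply pow_ne_zero
      norm_num
    · positivity

lemma fT_step {u : ℝ} (hu : 0 < u) (hqu : (Fintype.card F : ℝ) * u < 1)
    {T : Finset (Polynomial F)} (hT : ∀ Q ∈ T, Q.Monic ∧ Irreducible Q)
    {P : Polynomial F} (hPm : P.Monic) (hPi : Irreducible P) (hPT : P ∉ T) :
    ∑' D, fT T u D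
      = (1 - u ^ P.natDegree) * ∑' D, fT (insert P T) u D := by
  classical
  set c : ℕ → ℝ := fun k => if k ≤ 1 then (-1 : ℝ)^k * u^(k * P.natDegree) else 0 with hc
  set g : ℕ × Polynomial F → ℝ := fun p => c p.1 * fT (insert P T) u p.2 with hg
  have hP0 : P ≠ 0 := hPm.ne_zero
  have hcsum : Summable c := by
    apply summable_of_ne_finset_zero (s := ({0, 1} : Finset ℕ))
    intro k hk
    simp only [Finset.mem_insert, Finset.mem_singleton] at hk
    rw [hc]
    exact if_neg (by omega)
  have hfsum := fT_summable hu.le hqu (insert P T)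
  have hc0 : c 0 = 1 := by norm_num [hc]
  have hc1 : c 1 = -u ^ P.natDegree := by norm_num [hc]
  have hgsum : Summable g := by
    apply Summable.of_abs
    have h1 := Summable.mul_of_nonneg hcsum.abs hfsum.abs
      (fun k => abs_nonneg _) (fun D => abs_nonneg _)
    exact h1.congr (fun p => (abs_mul _ _).symm)
  -- Step A: reindex
  have hA : ∑' D, fT T u D = ∑' p, g p := by
    apply tsum_eq_tsum_of_ne_zero_bij (i := fun x => P ^ x.1.1 * x.1.2)
    · -- injective
      rintro ⟨⟨k, D⟩, hkD⟩ ⟨⟨k', D'⟩, hkD'⟩ h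
      simp only [Function.mem_support, hg] at hkD hkD'
      have hk : k ≤ 1 := by
        by_contra hgt
        rw [hc] at hkD
        simp only [if_neg hgt, zero_mul] at hkD
        exact hkD rfl
      have hk' : k' ≤ 1 := by
        by_contra hgt
        rw [hc] at hkD'
        simp only [if_neg hgt, zero_mul] at hkD'
        exact hkD' rfl
      have hD : fT (insert P T) u D ≠ 0 := fun hzero => hkD (by rw [hzero, mul_zero])
      have hD' : fT (insert P T) u D' ≠ 0 := fun hzero => hkD' (by rw [hzero, mul_zero])
      have hPD : ¬ P ∣ D := ((fT_ne_zero_iff hu).1 hD).2.1 P (Finset.mem_insert_self P T)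
      have hPD' : ¬ P ∣ D' := ((fT_ne_zero_iff hu).1 hD').2.1 P (Finset.mem_insert_self P T)
      simp only at h
      have key : ∀ {a b : ℕ} {X Y : Polynomial F}, a = 0 → b = 1 → ¬ P ∣ X →
          P ^ a * X = P ^ b * Y → False := by
        rintro a b X Y rfl rfl hX hxy
        rw [pow_zero, one_mul, pow_one] at hxy
        exact hX ⟨Y, hxy⟩
      have hkk : k = k' := by
        rcases Nat.lt_trichotomy k k' with hlt | heq | hgt
        · exact absurd (key (by omega) (by omega) hPD h) not_false
        · exact heq
        · exact absurd (key (by omega) (by omega) hPD' h.symm) not_false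
      subst hkk
      have : D = D' := mul_left_cancel₀ (pow_ne_zero _ hP0) h
      subst this
      rfl
    · -- support f ⊆ range
      intro D hD
      rw [Function.mem_support, fT_ne_zero_iff hu] at hD
      obtain ⟨hDm, hDT, hDsq⟩ := hD
      by_cases hPD : P ∣ D
      · obtain ⟨E, rfl⟩ := hPD
        have hEm : E.Monic := hPm.of_mul_monic_left hDm
        have hPE : ¬ P ∣ E := by
          intro hPE
          obtain ⟨G, rfl⟩ := hPE
          have : IsUnit P := hDsq P ⟨G, by ring⟩
          exact hPi.not_isUnit this
        refine ⟨⟨(1, E), ?_⟩, by simp⟩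
        rw [Function.mem_support, hg]
        apply mul_ne_zero
        · rw [hc]
          simp only [if_pos (le_refl 1)]
          apply mul_ne_zero (by norm_num)
          positivity
        · rw [fT_ne_zero_iff hu]
          refine ⟨hEm, ?_, hDsq.squarefree_of_dvd ⟨P, mul_comm P E⟩⟩
          intro Q hQ
          rcases Finset.mem_insert.1 hQ with rfl | hQT
          · exact hPE
          · intro hQE
            exact hDT Q hQT (hQE.trans ⟨P, mul_comm P E⟩)
      · refine ⟨⟨(0, D), ?_⟩, by simp⟩
        rw [Function.mem_support, hg]
        apply mul_ne_zero
        · rw [hc]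
          norm_num
        · rw [fT_ne_zero_iff hu]
          refine ⟨hDm, ?_, hDsq⟩
          intro Q hQ
          rcases Finset.mem_insert.1 hQ with rfl | hQT
          · exact hPD
          · exact hDT Q hQT
    · -- values
      rintro ⟨⟨k, D⟩, hkD⟩
      simp only [Function.mem_support, hg] at hkD
      have hk : k ≤ 1 := by
        by_contra hgt
        rw [hc] at hkD
        simp only [if_neg hgt, zero_mul] at hkD
        exact hkD rfl
      have hD : fT (insert P T) u D ≠ 0 := fun hzero => hkD (by rw [hzero, mul_zero])
      obtain ⟨hDm, hDins, hDsq⟩ := (fT_ne_zero_iff hu).1 hD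
      have hPD : ¬ P ∣ D := hDins P (Finset.mem_insert_self P T)
      have hDT : ∀ Q ∈ T, ¬ Q ∣ D := fun Q hQ => hDins Q (Finset.mem_insert_of_mem hQ)
      have hcond : ∀ kk : ℕ, (P ^ kk * D).Monic ∧ ∀ Q ∈ T, ¬ Q ∣ P ^ kk * D := by
        intro kk
        refine ⟨(hPm.pow kk).mul hDm, ?_⟩
        intro Q hQ hQdvd
        have hQi : Irreducible Q := (hT Q hQ).2
        have hQp : Prime Q := hQi.prime
        rcases hQp.2.2 _ _ hQdvd with hQP | hQD
        · have hQP' : Q ∣ P := hQp.dvd_of_dvd_pow hQP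
          have : Q = P := eq_of_monic_of_associated (hT Q hQ).1 hPm
            (hQi.associated_of_dvd hPi hQP')
          subst this
          exact hPT hQ
        · exact hDT Q hQ hQD
      interval_cases k
      · show fT T u (P ^ 0 * D) = c 0 * fT (insert P T) u D
        rw [pow_zero, one_mul, hc0, one_mul]
        simp only [fT]
        rw [if_pos ⟨hDm, hDT⟩, if_pos ⟨hDm, hDins⟩]
      · show fT T u (P ^ 1 * D) = c 1 * fT (insert P T) u D
        rw [pow_one, hc1]
        simp only [fT]
        rw [if_pos (⟨hPm.mul hDm,
            fun Q hQ hd => (hcond 1).2 Q hQ (by rwa [pow_one])⟩ :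
            (P * D).Monic ∧ ∀ Q ∈ T, ¬ Q ∣ P * D),
          if_pos ⟨hDm, hDins⟩]
        have hmul : polyMoebius' (P * D) = polyMoebius' P * polyMoebius' D :=
          polyMoebius'_mul hP0 hDm.ne_zero (isRelPrime_of_irreducible_not_dvd hPi hPD)
        rw [hmul, polyMoebius'_prime hPi.prime,
          natDegree_mul hP0 hDm.ne_zero, pow_add]
        push_cast
        ring
  rw [hA, Summable.tsum_prod hgsum]
  have hrow : ∀ k : ℕ, ∑' D, g (k, D) = c k * ∑' D, fT (insert P T) u D := by
    intro k
    show ∑' D, c k * fT (insert P T) u D = _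
    exact tsum_mul_left
  rw [tsum_congr hrow, tsum_mul_right]
  congr 1
  rw [tsum_eq_sum (s := ({0, 1} : Finset ℕ)) ?_]
  · rw [Finset.sum_insert (by norm_num), Finset.sum_singleton, hc0, hc1]
    ring
  · intro k hk
    simp only [Finset.mem_insert, Finset.mem_singleton] at hk
    show c k = 0
    simp only [hc]
    rw [if_neg (by omega)]

lemma fT_eval {u : ℝ} (hu : 0 < u) (hu1 : u < 1)
    (hqu : (Fintype.card F : ℝ) * u < 1) (T : Finset (Polynomial F)) :
    (∀ Q ∈ T, Q.Monic ∧ Irreducible Q) →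
    ∑' D, fT T u D
      = (1 - (Fintype.card F : ℝ) * u) * ∏ P ∈ T, (1 - u ^ P.natDegree)⁻¹ := by
  classical
  induction T using Finset.induction_on with
  | empty =>
    intro _
    rw [Finset.prod_empty, mul_one]
    rw [← tsum_moebius_all hu.le hqu]
    apply tsum_congr
    intro D
    rw [fT]
    congr 1
    rw [eq_iff_iff]
    constructor
    · exact fun h => h.1
    · exact fun h => ⟨h, by simp⟩
  | @insert P T hPT ih =>
    intro hT
    have hPm := (hT P (Finset.mem_insert_self P T)).1
    have hPi := (hT P (Finset.mem_insert_self P T)).2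
    have hT' : ∀ Q ∈ T, Q.Monic ∧ Irreducible Q :=
      fun Q hQ => hT Q (Finset.mem_insert_of_mem hQ)
    have hstep := fT_step hu hqu hT' hPm hPi hPT
    rw [ih hT'] at hstep
    have hdpos : 0 < P.natDegree := hPi.natDegree_pos
    have hne : (1 : ℝ) - u ^ P.natDegree ≠ 0 := by
      have : u ^ P.natDegree < 1 := pow_lt_one₀ hu.le hu1 (by omega)
      linarith
    rw [Finset.prod_insert hPT]
    have halg : (1 - (Fintype.card F : ℝ) * u) *
        ((1 - u ^ P.natDegree)⁻¹ * ∏ x ∈ T, (1 - u ^ x.natDegree)⁻¹)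
        = ((1 - (Fintype.card F : ℝ) * u) * ∏ x ∈ T, (1 - u ^ x.natDegree)⁻¹) *
          (1 - u ^ P.natDegree)⁻¹ := by ring
    rw [halg, hstep, mul_comm (1 - u ^ P.natDegree), mul_assoc,
      mul_inv_cancel₀ hne, mul_one]

end MoebiusAux

/-- For distinct `x 1, …, x ℓ` in `F_q` (`ℓ ≤ q`) and `U` with `U(x i) ≠ 0` for
all `i`, the sum `∑ μ(D) q^(-2 deg D)` over monic `D` coprime to `U` with
`D(x i) ≠ 0` for all `i` equals
`(1 - q⁻¹)(1 - q⁻²)^(-ℓ) ∏_{P ∣ U} (1 - q^(-2 deg P))⁻¹`. -/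
theorem moebius_sum_at_two (F : Type*) [Field F] [Fintype F] (q ℓ : ℕ)
    (hq : Fintype.card F = q) (hℓq : ℓ ≤ q)
    (x : Fin ℓ → F) (hx : Function.Injective x)
    (U : Polynomial F) (hU : U ≠ 0) (hUx : ∀ i, U.eval (x i) ≠ 0) :
    ∑' D : {D : Polynomial F // D.Monic ∧ IsCoprime D U ∧
        ∀ i : Fin ℓ, D.eval (x i) ≠ 0},
      (polyMoebius' D.1 : ℝ) * (q : ℝ) ^ (-(2 * (D.1.natDegree : ℤ))) =
      (1 - (q : ℝ)⁻¹) * ((1 - (q : ℝ) ^ (-2 : ℤ))⁻¹) ^ ℓ *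
        ∏ᶠ P ∈ {P : Polynomial F | P.Monic ∧ Irreducible P ∧ P ∣ U},
          (1 - (q : ℝ) ^ (-(2 * (P.natDegree : ℤ))))⁻¹ := by
  classical
  subst hq
  set u : ℝ := (Fintype.card F : ℝ) ^ (-2 : ℤ) with hu
  have hcard1 : (1 : ℝ) < (Fintype.card F : ℝ) := by exact_mod_cast Fintype.one_lt_card
  have hcard0 : (Fintype.card F : ℝ) ≠ 0 := by linarith
  have hu0 : 0 < u := by rw [hu]; positivity
  have hqinv : (Fintype.card F : ℝ) * u = (Fintype.card F : ℝ)⁻¹ := by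
    rw [hu]
    have h12 : ((Fintype.card F : ℝ)) * (Fintype.card F : ℝ) ^ (-2 : ℤ)
        = (Fintype.card F : ℝ) ^ ((1 : ℤ) + (-2)) := by
      rw [zpow_add₀ hcard0, zpow_one]
    rw [h12]
    norm_num
  have hqu : (Fintype.card F : ℝ) * u < 1 := by
    rw [hqinv]
    exact inv_lt_one_of_one_lt₀ hcard1
  have hu1 : u < 1 :=
    lt_of_le_of_lt (le_mul_of_one_le_left hu0.le hcard1.le) hqu
  have hpow : ∀ d : ℕ, (Fintype.card F : ℝ) ^ (-(2 * (d : ℤ))) = u ^ d := by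
    intro d
    rw [hu, show (-(2 * (d : ℤ))) = (-2) * (d : ℤ) by ring, zpow_mul, zpow_natCast]
  set L : Finset (Polynomial F) :=
    Finset.image (fun i => Polynomial.X - Polynomial.C (x i)) Finset.univ with hL
  set T : Finset (Polynomial F) := MoebiusAux.primesOf U ∪ L with hT
  have hTmi : ∀ Q ∈ T, Q.Monic ∧ Irreducible Q := by
    intro Q hQ
    rcases Finset.mem_union.1 hQ with h | h
    · have := (MoebiusAux.mem_primesOf hU).1 h
      exact ⟨this.1, this.2.1⟩
    · obtain ⟨i, -, rfl⟩ := Finset.mem_image.1 h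
      exact ⟨Polynomial.monic_X_sub_C _, Polynomial.irreducible_X_sub_C _⟩
  have hcond : ∀ D : Polynomial F,
      (D.Monic ∧ IsCoprime D U ∧ ∀ i : Fin ℓ, D.eval (x i) ≠ 0)
        ↔ (D.Monic ∧ ∀ P ∈ T, ¬ P ∣ D) := by
    intro D
    constructor
    · rintro ⟨hm, hcop, hev⟩
      refine ⟨hm, ?_⟩
      intro P hP hPD
      rcases Finset.mem_union.1 hP with h | h
      · obtain ⟨hPm, hPi, hPU⟩ := (MoebiusAux.mem_primesOf hU).1 h
        exact hPi.not_isUnit (hcop.isUnit_of_dvd' hPD hPU)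
      · obtain ⟨i, -, rfl⟩ := Finset.mem_image.1 h
        exact hev i (Polynomial.dvd_iff_isRoot.1 hPD)
    · rintro ⟨hm, hall⟩
      refine ⟨hm, ?_, ?_⟩
      · apply isCoprime_of_irreducible_dvd (fun hc => hU hc.2)
        intro z hz hzD hzU
        have hz0 : z ≠ 0 := hz.ne_zero
        have hzassoc := normalize_associated z
        have hzn : normalize z ∈ MoebiusAux.primesOf U := by
          rw [MoebiusAux.mem_primesOf hU]
          exact ⟨Polynomial.monic_normalize hz0, hzassoc.symm.irreducible hz,
            hzassoc.dvd.trans hzU⟩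
        exact hall (normalize z) (Finset.mem_union_left _ hzn) (hzassoc.dvd.trans hzD)
      · intro i hev0
        apply hall (Polynomial.X - Polynomial.C (x i))
          (Finset.mem_union_right _ (Finset.mem_image_of_mem _ (Finset.mem_univ i)))
        exact Polynomial.dvd_iff_isRoot.2 hev0
  have hterm : ∀ D : {D : Polynomial F // D.Monic ∧ IsCoprime D U ∧
      ∀ i : Fin ℓ, D.eval (x i) ≠ 0},
      (polyMoebius' D.1 : ℝ) * (Fintype.card F : ℝ) ^ (-(2 * (D.1.natDegree : ℤ)))
        = MoebiusAux.fT T u D.1 := by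
    intro D
    rw [MoebiusAux.fT, if_pos ((hcond D.1).1 D.2), hpow]
  have hsum_eq : (∑' D : {D : Polynomial F // D.Monic ∧ IsCoprime D U ∧
      ∀ i : Fin ℓ, D.eval (x i) ≠ 0}, MoebiusAux.fT T u D.1)
      = ∑' D : Polynomial F, MoebiusAux.fT T u D := by
    have h0 : (∑' D : {D : Polynomial F // D.Monic ∧ IsCoprime D U ∧
        ∀ i : Fin ℓ, D.eval (x i) ≠ 0}, MoebiusAux.fT T u D.1)
        = ∑' D : Polynomial F, Set.indicator {D : Polynomial F | D.Monic ∧ IsCoprime D U ∧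
          ∀ i : Fin ℓ, D.eval (x i) ≠ 0} (MoebiusAux.fT T u) D :=
      tsum_subtype _ _
    rw [h0]
    apply tsum_congr
    intro D
    rw [Set.indicator_apply]
    split_ifs with h
    · rfl
    · rw [MoebiusAux.fT, if_neg]
      intro hcon
      exact h ((hcond D).2 hcon)
  have hdisj : Disjoint (MoebiusAux.primesOf U) L := by
    rw [Finset.disjoint_right]
    intro P hPL hPU
    obtain ⟨i, -, rfl⟩ := Finset.mem_image.1 hPL
    have hdvd := ((MoebiusAux.mem_primesOf hU).1 hPU).2.2
    exact hUx i (Polynomial.dvd_iff_isRoot.1 hdvd)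
  have hLprod : ∏ P ∈ L, (1 - u ^ P.natDegree)⁻¹ = ((1 - u)⁻¹) ^ ℓ := by
    rw [hL, Finset.prod_image]
    · rw [Finset.prod_congr rfl (fun i _ => by
        rw [Polynomial.natDegree_X_sub_C, pow_one]),
        Finset.prod_const, Finset.card_univ, Fintype.card_fin]
    · intro i _ j _ h
      apply hx
      have := sub_right_inj.1 h
      exact Polynomial.C_injective this
  have hset : {P : Polynomial F | P.Monic ∧ Irreducible P ∧ P ∣ U}
      = ↑(MoebiusAux.primesOf U) := by
    ext P
    simp [MoebiusAux.mem_primesOf hU]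
  rw [hset, finprod_mem_coe_finset]
  rw [tsum_congr hterm, hsum_eq, MoebiusAux.fT_eval hu0 hu1 hqu T hTmi]
  rw [Finset.prod_congr (rfl : MoebiusAux.primesOf U = MoebiusAux.primesOf U)
    (fun P hP => by rw [hpow P.natDegree])]
  rw [hT, Finset.prod_union hdisj, hLprod, ← hqinv]
  ring
end
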